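/- Let D be a countable set. Any word W in the set W(D) of infinitary words over D (functions from a countable linearly ordered set to D ⊔ D⁻ in which each letter occurs only finitely often) is equivalent to the empty word — meaning that for every finite subset F of D, the finite word W_F obtained by keeping only letters from F evaluates to the identity of the free group on F — if and only if there exists a noncrossing inverse pairing Γ on the index set of W with ⋃Γ equal to the whole index set. -/

import Mathlib

noncomputable section

namespace EarringPaper

/-- An infinitary word over the alphabet `D`: a function from a countable linearly
ordered index set to the letters `a`/`a⁻` (`(a, true)`/`(a, false)`), in which each
letter occurs only finitely often. -/
structure InfWord (D : Type*) where
  ι : Type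
  [ord : LinearOrder ι]
  [cnt : Countable ι]
  letter : ι → D × Bool
  finOcc : ∀ a : D, {i : ι | (letter i).1 = a}.Finite

attribute [instance] InfWord.ord InfWord.cnt

variable {D : Type*}

lemma InfWord.finF (W : InfWord D) (F : Finset D) :
    {i : W.ι | (W.letter i).1 ∈ F}.Finite := by
  have h : {i : W.ι | (W.letter i).1 ∈ F} = ⋃ a ∈ F, {i : W.ι | (W.letter i).1 = a} := by
    ext i; simp
  rw [h]
  exact F.finite_toSet.biUnion fun a _ => W.finOcc a

/-- The finite word `W_F`: the restriction of `W` to the letters from the finite set `F`,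
evaluated as an element of the free group on `D`. -/
def InfWord.evalF (W : InfWord D) (F : Finset D) : FreeGroup D :=
  (((W.finF F).toFinset.sort (· ≤ ·)).map fun i => FreeGroup.mk [W.letter i]).prod

/-- `W` is equivalent to the empty word: all its finite restrictions `W_F` are trivial. -/
def InfWord.IsNull (W : InfWord D) : Prop := ∀ F : Finset D, W.evalF F = 1

/-- The subword of `W` supported on a set `S` of indices. -/
def InfWord.restrict (W : InfWord D) (S : Set W.ι) : InfWord D where
  ι := S
  letter i := W.letter i.val
  finOcc a := by
    have h : {i : S | (W.letter i.val).1 = a} =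
        Subtype.val ⁻¹' {i : W.ι | (W.letter i).1 = a} := rfl
    rw [h]
    exact (W.finOcc a).preimage Subtype.val_injective.injOn

/-- An order-convex set of indices (the support of a subword). -/
def IsConvexSub {W : InfWord D} (S : Set W.ι) : Prop :=
  ∀ i ∈ S, ∀ j ∈ S, ∀ k, i ≤ k → k ≤ j → k ∈ S

/-- An infinitary word is reduced if no nonempty subword is equivalent to the empty word. -/
def InfWord.Reduced (W : InfWord D) : Prop :=
  ∀ S : Set W.ι, S.Nonempty → IsConvexSub S → ¬(W.restrict S).IsNull

/-- A noncrossing inverse pairing on the infinitary word `W`. -/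
structure InfNCIP (W : InfWord D) (Γ : Set (W.ι × W.ι)) : Prop where
  lt : ∀ p ∈ Γ, p.1 < p.2
  inv : ∀ p ∈ Γ, (W.letter p.1).1 = (W.letter p.2).1 ∧
    (W.letter p.1).2 = !(W.letter p.2).2
  disj : ∀ p ∈ Γ, ∀ q ∈ Γ, p ≠ q → p.1 ≠ q.1 ∧ p.1 ≠ q.2 ∧ p.2 ≠ q.1 ∧ p.2 ≠ q.2
  noncross : ∀ p ∈ Γ, ∀ q ∈ Γ, ¬(p.1 < q.1 ∧ q.1 < p.2 ∧ p.2 < q.2)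
  covered : ∀ p ∈ Γ, ∀ k, p.1 ≤ k → k ≤ p.2 → ∃ q ∈ Γ, q.1 = k ∨ q.2 = k

end EarringPaper

namespace EarringPaper

open FreeGroup

/-- Flip the sign of a letter. -/
def flipL (x : D × Bool) : D × Bool := (x.1, !x.2)

@[simp] lemma flipL_flipL (x : D × Bool) : flipL (flipL x) = x := by
  cases x; simp [flipL]

/-- A complete noncrossing inverse pairing on a finite word, given as an
involution on positions. -/
def IsPairing (L : List (D × Bool)) (f : ℕ → ℕ) : Prop :=
  (∀ i, i < L.length → f i < L.length ∧ f (f i) = i ∧ f i ≠ i ∧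
     L[f i]? = (L[i]?).map flipL) ∧
  (∀ i j, i < L.length → j < L.length → i < j → j < f i → f i < f j → False)

lemma isPairing_nil (f : ℕ → ℕ) : IsPairing ([] : List (D × Bool)) f := by
  constructor <;> intro i <;> simp

/-- Lemma A: a trivial word admits a complete noncrossing pairing. -/
lemma exists_pairing_of_red (L : List (D × Bool)) (h : Red L []) :
    ∃ f, IsPairing L f := by
  induction h using Relation.ReflTransGen.head_induction_on with
  | refl => exact ⟨id, isPairing_nil id⟩
  | head hstep _hred ih =>
    obtain ⟨f', hP'⟩ := ih
    cases hstep with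
    | @not L₁ L₂ x b =>
      set p := L₁.length with hp
      set e : ℕ → ℕ := fun k => if k < p then k else k + 2 with he
      set d : ℕ → ℕ := fun i => if i < p then i else i - 2 with hd
      have he_lt : ∀ a b, e a < e b ↔ a < b := by
        intro a b; simp only [he]; split_ifs <;> omega
      have hde : ∀ k, d (e k) = k := by
        intro k; simp only [he, hd]; split_ifs <;> omega
      have hed : ∀ i, i ≠ p → i ≠ p + 1 → e (d i) = i := by
        intro i h1 h2; simp only [he, hd]; split_ifs <;> omega
      have he_ne : ∀ k, e k ≠ p ∧ e k ≠ p + 1 := by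
        intro k; simp only [he]; split_ifs <;> omega
      set n' := (L₁ ++ L₂).length with hn'
      have hlen : (L₁ ++ (x, b) :: (x, !b) :: L₂).length = n' + 2 := by
        simp [hn']; omega
      have he_lt_n : ∀ k, k < n' → e k < n' + 2 := by
        intro k hk; simp only [he]; split_ifs <;> omega
      have hd_lt : ∀ i, i < n' + 2 → i ≠ p → i ≠ p + 1 → d i < n' := by
        intro i h1 h2 h3; simp only [hd, hn'] at *
        simp only [List.length_append] at *
        split_ifs <;> simp_all <;> omega
      have hgetp : (L₁ ++ (x, b) :: (x, !b) :: L₂)[p]? = some (x, b) := by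
        rw [List.getElem?_append, if_neg (by omega)]
        simp [hp]
      have hgetp1 : (L₁ ++ (x, b) :: (x, !b) :: L₂)[p+1]? = some (x, !b) := by
        rw [List.getElem?_append, if_neg (by omega)]
        have : p + 1 - L₁.length = 1 := by omega
        rw [this]
        simp
      have hgetE : ∀ k, (L₁ ++ (x, b) :: (x, !b) :: L₂)[e k]? = (L₁ ++ L₂)[k]? := by
        intro k
        by_cases hk : k < p
        · simp only [he, if_pos hk]
          rw [List.getElem?_append, if_pos (by omega), List.getElem?_append, if_pos (by omega)]
        · simp only [he, if_neg hk]
          rw [List.getElem?_append, if_neg (by omega), List.getElem?_append, if_neg (by omega)]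
          have : k + 2 - L₁.length = (k - L₁.length) + 2 := by omega
          rw [this]
          simp
      set f : ℕ → ℕ := fun i =>
        if i = p then p + 1 else if i = p + 1 then p else e (f' (d i)) with hf
      have hpn : p + 1 < n' + 2 := by
        simp only [hn', hp, List.length_append] at *; omega
      refine ⟨f, ?_, ?_⟩
      · intro i hi
        rw [hlen] at hi
        by_cases h1 : i = p
        · subst h1
          have hfp : f p = p + 1 := by simp [hf]
          have hfp1 : f (p+1) = p := by simp [hf]
          refine ⟨by omega, by rw [hfp, hfp1], by omega, ?_⟩
          rw [hfp, hgetp1, hgetp]; rfl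
        by_cases h2 : i = p + 1
        · subst h2
          have hfp : f p = p + 1 := by simp [hf]
          have hfp1 : f (p+1) = p := by simp [hf]
          refine ⟨by omega, by rw [hfp1, hfp], by omega, ?_⟩
          rw [hfp1, hgetp, hgetp1]; simp [flipL]
        · have hdi : d i < n' := hd_lt i hi h1 h2
          obtain ⟨hb1, hb2, hb3, hb4⟩ := hP'.1 (d i) hdi
          have hfi : f i = e (f' (d i)) := by simp [hf, h1, h2]
          have hfine : f i ≠ p ∧ f i ≠ p + 1 := by rw [hfi]; exact he_ne _
          have hffi : f (f i) = e (f' (d (f i))) := by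
            show (if f i = p then p + 1 else if f i = p + 1 then p else e (f' (d (f i)))) = _
            rw [if_neg hfine.1, if_neg hfine.2]
          refine ⟨by rw [hfi]; exact hlen ▸ he_lt_n _ hb1, ?_, ?_, ?_⟩
          · rw [hffi, hfi, hde, hb2, hed i h1 h2]
          · rw [hfi]
            intro hcon
            have h5 := hde (f' (d i))
            rw [hcon] at h5
            exact hb3 h5.symm
          · rw [hfi, hgetE, hb4, ← hgetE (d i), hed i h1 h2]
      · intro i j hi hj hij hjfi hfifj
        rw [hlen] at hi hj
        by_cases h1 : i = p
        · have : f i = p + 1 := by simp [hf, h1]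
          omega
        by_cases h2 : i = p + 1
        · have : f i = p := by simp [hf, h2]
          omega
        by_cases h3 : j = p
        · have : f j = p + 1 := by simp [hf, h3]
          have hfine : f i ≠ p + 1 := by
            have : f i = e (f' (d i)) := by simp [hf, h1, h2]
            rw [this]; exact (he_ne _).2
          omega
        by_cases h4 : j = p + 1
        · have : f j = p := by simp [hf, h4]
          omega
        · have hfi : f i = e (f' (d i)) := by simp [hf, h1, h2]
          have hfj : f j = e (f' (d j)) := by simp [hf, h3, h4]
          have hdi : d i < n' := hd_lt i hi h1 h2
          have hdj : d j < n' := hd_lt j hj h3 h4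
          have e1 : d i < d j := by
            rw [← he_lt, hed i h1 h2, hed j h3 h4]; exact hij
          have e2 : d j < f' (d i) := by
            rw [← he_lt, hed j h3 h4, ← hfi]; exact hjfi
          have e3 : f' (d i) < f' (d j) := by
            rw [← he_lt, ← hfi, ← hfj]; exact hfifj
          exact hP'.2 (d i) (d j) hdi hdj e1 e2 e3


lemma mk_pair_cancel (x : D × Bool) : FreeGroup.mk [x, flipL x] = 1 := by
  have h : FreeGroup.mk ([] ++ (x.1, x.2) :: (x.1, !x.2) :: []) = FreeGroup.mk ([] ++ []) :=
    Quot.sound Red.Step.not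
  simpa [flipL, FreeGroup.one_eq_mk] using h

/-- Lemma B: a word with a complete noncrossing pairing is trivial. -/
lemma mk_eq_one_of_pairing : ∀ n (L : List (D × Bool)) (f : ℕ → ℕ), L.length = n →
    IsPairing L f → FreeGroup.mk L = 1 := by
  intro n
  induction n using Nat.strong_induction_on with
  | _ n ih =>
    intro L f hn hP
    rcases Nat.eq_zero_or_pos n with h0 | hpos
    · subst h0
      rw [List.length_eq_zero_iff.1 hn, FreeGroup.one_eq_mk]
    have h0n : 0 < L.length := hn ▸ hpos
    obtain ⟨hm1, hm2, hm3, hm4⟩ := hP.1 0 h0n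
    set m := f 0 with hm
    have hmpos : 0 < m := Nat.pos_of_ne_zero hm3
    -- claim 1 : pairs inside (0, m) stay inside
    have claim1 : ∀ k, 0 < k → k < m → 0 < f k ∧ f k < m := by
      intro k hk1 hk2
      obtain ⟨hk3, hk4, hk5, _⟩ := hP.1 k (lt_trans hk2 hm1)
      have hne0 : f k ≠ 0 := by
        intro hcon; rw [← hcon, hk4] at hm; omega
      have hnem : f k ≠ m := by
        intro hcon
        rw [← hcon, hk4] at hm2
        omega
      constructor
      · omega
      · by_contra hcon
        exact hP.2 0 k h0n (lt_trans hk2 hm1) hk1 hk2 (by omega)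
    have claim2 : ∀ k, m < k → k < L.length → m < f k := by
      intro k hk1 hk2
      obtain ⟨hk3, hk4, hk5, _⟩ := hP.1 k hk2
      have hne0 : f k ≠ 0 := by
        intro hcon; rw [← hcon, hk4] at hm; omega
      have hnem : f k ≠ m := by
        intro hcon; rw [← hcon, hk4] at hm2; omega
      by_contra hcon
      have hrange : 0 < f k ∧ f k < m := by omega
      have := (claim1 (f k) hrange.1 hrange.2).2
      rw [hk4] at this
      omega
    set x := L[0]'h0n with hx
    set y := L[m]'hm1 with hy
    set u := (L.drop 1).take (m-1) with hu
    set v := L.drop (m+1) with hv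
    have hdecomp : L = x :: (u ++ y :: v) := by
      have h1 : L.drop 1 = u ++ L.drop m := by
        rw [hu]
        conv_lhs => rw [← List.take_append_drop (m-1) (L.drop 1)]
        rw [List.drop_drop]
        congr 2
        omega
      have h2 : L.drop m = y :: v := List.drop_eq_getElem_cons hm1
      conv_lhs => rw [← List.drop_zero (l := L), List.drop_eq_getElem_cons h0n]
      rw [show (0:ℕ)+1 = 1 by norm_num, h1, h2]
    have hulen : u.length = m - 1 := by
      rw [hu]; simp; omega
    have hvlen : v.length = L.length - (m+1) := by rw [hv]; simp
    have hugt : ∀ k, k < m - 1 → u[k]? = L[k+1]? := by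
      intro k hk
      rw [hu, List.getElem?_take, if_pos hk, List.getElem?_drop]
      congr 1; omega
    have hvgt : ∀ k, v[k]? = L[k+m+1]? := by
      intro k
      rw [hv, List.getElem?_drop]
      congr 1; omega
    -- pairing on u
    have hPu : IsPairing u (fun k => f (k+1) - 1) := by
      constructor
      · intro k hk
        beta_reduce
        rw [hulen] at hk
        have hk1 : 0 < k + 1 := by omega
        have hk2 : k + 1 < m := by omega
        obtain ⟨hc1, hc2⟩ := claim1 (k+1) hk1 hk2
        obtain ⟨hd1, hd2, hd3, hd4⟩ := hP.1 (k+1) (lt_trans hk2 hm1)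
        have he : f (k+1) - 1 + 1 = f (k+1) := by omega
        refine ⟨by rw [hulen]; omega, by rw [he, hd2]; omega, by omega, ?_⟩
        rw [hugt _ (by omega), hugt _ hk, he, hd4]
      · intro a c ha hc hac h1 h2
        beta_reduce at h1 h2 ⊢
        rw [hulen] at ha hc
        obtain ⟨hc1, hc2⟩ := claim1 (a+1) (by omega) (by omega)
        obtain ⟨hc3, hc4⟩ := claim1 (c+1) (by omega) (by omega)
        exact hP.2 (a+1) (c+1) (by omega) (by omega) (by omega) (by omega) (by omega)
    have hPv : IsPairing v (fun k => f (k+m+1) - (m+1)) := by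
      constructor
      · intro k hk
        beta_reduce
        rw [hvlen] at hk
        have hk2 : k + m + 1 < L.length := by omega
        have hc1 := claim2 (k+m+1) (by omega) hk2
        obtain ⟨hd1, hd2, hd3, hd4⟩ := hP.1 (k+m+1) hk2
        have hcne : f (k+m+1) ≠ m := by
          intro hcon; rw [← hcon, hd2] at hm2; omega
        have he : f (k+m+1) - (m+1) + m + 1 = f (k+m+1) := by omega
        refine ⟨by rw [hvlen]; omega, by rw [he, hd2]; omega, by omega, ?_⟩
        rw [hvgt, hvgt, he, hd4]
      · intro a c ha hc hac h1 h2
        beta_reduce at h1 h2 ⊢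
        rw [hvlen] at ha hc
        have hc1 := claim2 (a+m+1) (by omega) (by omega)
        have hc2 := claim2 (c+m+1) (by omega) (by omega)
        exact hP.2 (a+m+1) (c+m+1) (by omega) (by omega) (by omega) (by omega) (by omega)
    have hmu : FreeGroup.mk u = 1 :=
      ih u.length (by rw [hulen]; omega) u _ rfl hPu
    have hmv : FreeGroup.mk v = 1 :=
      ih v.length (by rw [hvlen]; omega) v _ rfl hPv
    have hyx : y = flipL x := by
      have h1 : L[m]? = some y := List.getElem?_eq_getElem hm1
      have h2 : L[0]? = some x := List.getElem?_eq_getElem h0n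
      rw [h1, h2] at hm4
      simpa using hm4
    calc FreeGroup.mk L = FreeGroup.mk ([x] ++ u ++ ([y] ++ v)) := by
          rw [hdecomp]; simp
      _ = FreeGroup.mk [x] * FreeGroup.mk u * (FreeGroup.mk [y] * FreeGroup.mk v) := by
          rw [FreeGroup.mul_mk, FreeGroup.mul_mk, FreeGroup.mul_mk]
      _ = FreeGroup.mk [x] * FreeGroup.mk [y] := by rw [hmu, hmv, mul_one, mul_one]
      _ = 1 := by rw [hyx, FreeGroup.mul_mk]; exact mk_pair_cancel x

/-! ### Auxiliary lemmas for the proof -/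

section Aux

open FreeGroup

lemma red_of_mk_eq_one {α : Type*} {L : List (α × Bool)} (h : FreeGroup.mk L = 1) :
    FreeGroup.Red L [] := by
  rw [FreeGroup.one_eq_mk] at h
  obtain ⟨c, h1, h2⟩ := FreeGroup.Red.exact.1 h
  rwa [FreeGroup.Red.nil_iff.1 h2] at h1

lemma prod_map_mk {α : Type*} {ι : Type*} (w : ι → α × Bool) :
    ∀ l : List ι, (l.map fun i => FreeGroup.mk [w i]).prod = FreeGroup.mk (l.map w) := by
  intro l
  induction l with
  | nil => simp [FreeGroup.one_eq_mk]
  | cons a l ih =>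
    simp only [List.map_cons, List.prod_cons, ih, FreeGroup.mul_mk, List.singleton_append]

lemma sorted_get_lt_iff {ι : Type*} [LinearOrder ι] {l : List ι} (hs : l.Pairwise (· < ·))
    (a b : Fin l.length) : l.get a < l.get b ↔ a < b := by
  constructor
  · intro h
    by_contra hc
    rcases lt_or_eq_of_le (not_lt.1 hc) with h2 | h2
    · exact absurd h (not_lt.2 (hs.rel_get_of_lt h2).le)
    · rw [h2] at h; exact lt_irrefl _ h
  · exact hs.rel_get_of_lt

lemma evalF_eq_mk {D : Type*} (W : InfWord D) (F : Finset D) :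
    W.evalF F = FreeGroup.mk (((W.finF F).toFinset.sort (· ≤ ·)).map W.letter) :=
  prod_map_mk W.letter _

end Aux

lemma isNull_of_ncip {D : Type*} (W : InfWord D) (Γ : Set (W.ι × W.ι)) (hΓ : InfNCIP W Γ)
    (hcov : ∀ i : W.ι, ∃ p ∈ Γ, p.1 = i ∨ p.2 = i) : W.IsNull := by
  classical
  -- the partner function
  choose pr hpr1 hpr2 using hcov
  have hshare : ∀ p ∈ Γ, ∀ q ∈ Γ, (p.1 = q.1 ∨ p.1 = q.2 ∨ p.2 = q.1 ∨ p.2 = q.2) → p = q := by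
    intro p hp q hq h
    by_contra hne
    obtain ⟨a, b, c, d⟩ := hΓ.disj p hp q hq hne
    tauto
  set other : W.ι → W.ι := fun i => if (pr i).1 = i then (pr i).2 else (pr i).1 with hother
  have hoth_spec : ∀ i, pr i = (i, other i) ∨ pr i = (other i, i) := by
    intro i
    rcases hpr2 i with h | h
    · left; rw [hother]; simp only [h, if_pos]; exact Prod.ext h rfl
    · by_cases h1 : (pr i).1 = i
      · left; rw [hother]; simp only [h1, if_pos]; exact Prod.ext h1 rfl
      · right; rw [hother]; simp only [if_neg h1]; exact Prod.ext rfl h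
  have hne : ∀ i, other i ≠ i := by
    intro i hcon
    have hlt := hΓ.lt (pr i) (hpr1 i)
    rcases hoth_spec i with h | h <;> rw [h] at hlt <;> rw [hcon] at hlt <;>
      exact lt_irrefl _ hlt
  have hoo : ∀ i, other (other i) = i := by
    intro i
    have heq : pr (other i) = pr i := by
      apply hshare _ (hpr1 (other i)) _ (hpr1 i)
      rcases hoth_spec i with h | h <;> rcases hpr2 (other i) with h2 | h2 <;>
        rw [h] <;> simp [h2]
    have hoth1 : ∀ (j x : W.ι), pr j = (j, x) → other j = x := by
      intro j x hjx
      show (if (pr j).1 = j then (pr j).2 else (pr j).1) = x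
      rw [hjx]
      simp
    have hoth2 : ∀ (j x : W.ι), pr j = (x, j) → other j = x := by
      intro j x hjx
      show (if (pr j).1 = j then (pr j).2 else (pr j).1) = x
      rw [hjx]
      by_cases hc : x = j
      · simp [hc]
      · simp [hc]
    rcases hoth_spec i with h | h
    · exact hoth2 (other i) i (heq.trans h)
    · exact hoth1 (other i) i (heq.trans h)
  have hletter : ∀ i, (W.letter (other i)).1 = (W.letter i).1 ∧
      (W.letter (other i)).2 = !(W.letter i).2 := by
    intro i
    have hinv := hΓ.inv (pr i) (hpr1 i)
    rcases hoth_spec i with h | h <;> rw [h] at hinv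
    · exact ⟨hinv.1.symm, by rw [hinv.2, Bool.not_not]⟩
    · exact hinv
  have hpairΓ : ∀ i, i < other i → (i, other i) ∈ Γ := by
    intro i hlt
    rcases hoth_spec i with h | h
    · rw [← h]; exact hpr1 i
    · exfalso
      have := hΓ.lt (pr i) (hpr1 i)
      rw [h] at this
      exact lt_irrefl _ (lt_trans hlt this)
  have hnc : ∀ i j, i < j → j < other i → other i < other j → False := by
    intro i j h1 h2 h3
    have hp : (i, other i) ∈ Γ := hpairΓ i (lt_trans h1 h2)
    have hq : (j, other j) ∈ Γ := hpairΓ j (lt_trans h2 h3)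
    exact hΓ.noncross _ hp _ hq ⟨h1, h2, h3⟩
  -- now prove each evalF is 1
  intro F
  set l := (W.finF F).toFinset.sort (· ≤ ·) with hl
  have hmem : ∀ i, i ∈ l ↔ (W.letter i).1 ∈ F := by
    intro i; rw [hl, Finset.mem_sort, Set.Finite.mem_toFinset]; rfl
  have hnd : l.Nodup := Finset.sort_nodup _ _
  have hsort : l.Pairwise (· < ·) := (Finset.sortedLT_sort _).pairwise
  set M := l.map W.letter with hM
  have hMl : M.length = l.length := List.length_map _
  have hol : ∀ i ∈ l, other i ∈ l := by
    intro i h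
    rw [hmem]
    rw [(hletter i).1]
    exact (hmem i).1 h
  set f : ℕ → ℕ := fun k =>
    if h : k < l.length then l.idxOf (other (l.get ⟨k, h⟩)) else k with hf
  have hfval : ∀ k (h : k < l.length), f k = l.idxOf (other (l.get ⟨k, h⟩)) := by
    intro k h; rw [hf]; simp only [dif_pos h]
  have hflt : ∀ k (h : k < l.length), f k < l.length := by
    intro k h
    rw [hfval k h]
    exact List.idxOf_lt_length_iff.2 (hol _ (l.get_mem _))
  have hfget : ∀ k (h : k < l.length), l.get ⟨f k, hflt k h⟩ = other (l.get ⟨k, h⟩) := by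
    intro k h
    have hidx : l.idxOf (other (l.get ⟨k, h⟩)) < l.length :=
      List.idxOf_lt_length_iff.2 (hol _ (l.get_mem _))
    have h2 : l.get ⟨_, hidx⟩ = other (l.get ⟨k, h⟩) := List.idxOf_get hidx
    rw [← h2]
    congr 1
    exact Fin.ext (hfval k h)
  have hMget : ∀ (j : ℕ) (h : j < l.length), M[j]? = some (W.letter (l.get ⟨j, h⟩)) := by
    intro j h
    rw [hM, List.getElem?_map, List.getElem?_eq_getElem h]
    rfl
  have hPair : IsPairing M f := by
    constructor
    · intro k hk
      rw [hMl] at hk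
      have h1 := hflt k hk
      have h2 := hfget k hk
      refine ⟨hMl ▸ h1, ?_, ?_, ?_⟩
      · rw [hfval (f k) h1, h2, hoo]
        exact List.get_idxOf hnd ⟨k, hk⟩
      · intro hcon
        apply hne (l.get ⟨k, hk⟩)
        rw [← h2]
        congr 1
        exact Fin.ext hcon
      · rw [hMget _ h1, hMget _ hk, h2]
        obtain ⟨e1, e2⟩ := hletter (l.get ⟨k, hk⟩)
        simp only [Option.map_some]
        congr 1
        exact Prod.ext e1 (by rw [e2]; rfl)
    · intro a b ha hb hab h1 h2
      rw [hMl] at ha hb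
      have hfa := hflt a ha
      have hfb := hflt b hb
      apply hnc (l.get ⟨a, ha⟩) (l.get ⟨b, hb⟩)
      · exact hsort.rel_get_of_lt hab
      · rw [← hfget a ha]; exact hsort.rel_get_of_lt h1
      · rw [← hfget a ha, ← hfget b hb]; exact hsort.rel_get_of_lt h2
  rw [InfWord.evalF, ← hl, prod_map_mk W.letter l, ← hM]
  exact mk_eq_one_of_pairing M.length M f rfl hPair

lemma exists_ncip_of_isNull {D : Type*} [Countable D] (W : InfWord D) (hNull : W.IsNull) :
    ∃ Γ : Set (W.ι × W.ι), InfNCIP W Γ ∧ ∀ i : W.ι, ∃ p ∈ Γ, p.1 = i ∨ p.2 = i := by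
  classical
  -- Step 1 : for every finite F, a "partner" function on the F-indices
  have hkey : ∀ F : Finset D, ∃ g : W.ι → W.ι, ∀ i, (W.letter i).1 ∈ F →
      (W.letter (g i)).1 ∈ F ∧ g i ≠ i ∧ g (g i) = i ∧
      W.letter (g i) = flipL (W.letter i) ∧
      (∀ j, (W.letter j).1 ∈ F → i < j → j < g i → g i < g j → False) := by
    intro F
    set l := (W.finF F).toFinset.sort (· ≤ ·) with hl
    have hmem : ∀ i, i ∈ l ↔ (W.letter i).1 ∈ F := by
      intro i; rw [hl, Finset.mem_sort, Set.Finite.mem_toFinset]; rfl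
    have hnd : l.Nodup := Finset.sort_nodup _ _
    have hsort : l.Pairwise (· < ·) := (Finset.sortedLT_sort _).pairwise
    set M := l.map W.letter with hM
    have hMl : M.length = l.length := List.length_map _
    have hone : FreeGroup.mk M = 1 := by
      rw [hM, ← prod_map_mk W.letter l]
      exact hNull F
    obtain ⟨f, hf⟩ := exists_pairing_of_red M (red_of_mk_eq_one hone)
    have hMget : ∀ (j : ℕ) (h : j < l.length), M[j]? = some (W.letter (l.get ⟨j, h⟩)) := by
      intro j h
      rw [hM, List.getElem?_map, List.getElem?_eq_getElem h]
      rfl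
    have hb : ∀ i, i ∈ l → f (l.idxOf i) < l.length := by
      intro i h
      have h1 : l.idxOf i < M.length := by
        rw [hMl]; exact List.idxOf_lt_length_iff.2 h
      exact hMl ▸ (hf.1 _ h1).1
    refine ⟨fun i => if h : i ∈ l then l.get ⟨f (l.idxOf i), hb i h⟩ else i, ?_⟩
    intro i hiF
    have hi : i ∈ l := (hmem i).2 hiF
    beta_reduce
    rw [dif_pos hi]
    set k := l.idxOf i with hk
    have hkl : k < l.length := List.idxOf_lt_length_iff.2 hi
    have hkM : k < M.length := hMl ▸ hkl
    have geti : l.get ⟨k, hkl⟩ = i := List.idxOf_get hkl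
    obtain ⟨hb1, hb2, hb3, hb4⟩ := hf.1 k hkM
    set gi := l.get ⟨f k, hb i hi⟩ with hgidef
    have hgi_mem : gi ∈ l := l.get_mem _
    have hletgi : W.letter gi = flipL (W.letter i) := by
      have e1 := hMget (f k) (hb i hi)
      have e2 := hMget k hkl
      rw [e1, e2, geti] at hb4
      simpa [hgidef] using hb4
    have hgiF : (W.letter gi).1 ∈ F := by
      rw [hletgi]; exact hiF
    have hidxgi : l.idxOf gi = f k := by
      rw [hgidef]; exact List.get_idxOf hnd _
    refine ⟨hgiF, ?_, ?_, hletgi, ?_⟩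
    · intro hcon
      apply hb3
      rw [← hidxgi, hcon]
    · rw [dif_pos hgi_mem, ← geti]
      congr 1
      apply Fin.ext
      show f (l.idxOf gi) = k
      rw [hidxgi]
      exact hb2
    · intro j hjF hij hjgi hgigj
      have hj : j ∈ l := (hmem j).2 hjF
      rw [dif_pos hj] at hgigj
      set c := l.idxOf j with hc
      have hcl : c < l.length := List.idxOf_lt_length_iff.2 hj
      have getj : l.get ⟨c, hcl⟩ = j := List.idxOf_get hcl
      have e1 : (⟨k, hkl⟩ : Fin l.length) < ⟨c, hcl⟩ := by
        rw [← sorted_get_lt_iff hsort, geti, getj]; exact hij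
      have e2 : (⟨c, hcl⟩ : Fin l.length) < ⟨f k, hb i hi⟩ := by
        rw [← sorted_get_lt_iff hsort, getj]; exact hjgi
      have e3 : (⟨f k, hb i hi⟩ : Fin l.length) < ⟨f c, hb j hj⟩ := by
        rw [← sorted_get_lt_iff hsort]; exact hgigj
      exact hf.2 k c hkM (hMl ▸ hcl) e1 e2 e3
  choose g hg using hkey
  -- Step 2 : ultrafilter limit
  letI : DecidableEq D := Classical.decEq D
  obtain ⟨U, hU⟩ := Ultrafilter.exists_le (Filter.atTop : Filter (Finset D))
  have hIci : ∀ F₀ : Finset D, {F | F₀ ≤ F} ∈ U :=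
    fun F₀ => hU (Filter.Ici_mem_atTop F₀)
  have hA : ∀ i : W.ι, {F : Finset D | (W.letter i).1 ∈ F} ∈ U := by
    intro i
    apply Filter.mem_of_superset (hIci {(W.letter i).1})
    intro F hF
    exact hF (Finset.mem_singleton_self _)
  have hUi : ∀ i : W.ι, ∃ j, {F : Finset D | (W.letter i).1 ∈ F ∧ g F i = j} ∈ U := by
    intro i
    have hsub : {F : Finset D | (W.letter i).1 ∈ F} ⊆
        ⋃ j ∈ {j | (W.letter j).1 = (W.letter i).1},
          {F : Finset D | (W.letter i).1 ∈ F ∧ g F i = j} := by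
      intro F hF
      have := (hg F i hF).2.2.2.1
      refine Set.mem_biUnion ?_ ⟨hF, rfl⟩
      show (W.letter (g F i)).1 = (W.letter i).1
      rw [this]
      rfl
    have hmemU : (⋃ j ∈ {j | (W.letter j).1 = (W.letter i).1},
        {F : Finset D | (W.letter i).1 ∈ F ∧ g F i = j}) ∈ U :=
      Filter.mem_of_superset (hA i) hsub
    obtain ⟨j, _, hj⟩ := (Ultrafilter.finite_biUnion_mem_iff (W.finOcc (W.letter i).1)).1 hmemU
    exact ⟨j, hj⟩
  choose P hP using hUi
  have hProp2 : ∀ i, P i ≠ i ∧ P (P i) = i ∧ W.letter (P i) = flipL (W.letter i) := by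
    intro i
    have hmem2 : ({F : Finset D | (W.letter i).1 ∈ F ∧ g F i = P i} ∩
        {F : Finset D | (W.letter (P i)).1 ∈ F ∧ g F (P i) = P (P i)}) ∈ U :=
      Filter.inter_mem (hP i) (hP (P i))
    obtain ⟨F, ⟨hF1, hF2⟩, _, hF4⟩ := Ultrafilter.nonempty_of_mem hmem2
    obtain ⟨_, hg2, hg3, hg4, _⟩ := hg F i hF1
    rw [hF2] at hg2 hg3 hg4
    rw [hF4] at hg3
    exact ⟨hg2, hg3, hg4⟩
  have hProp3 : ∀ i j, i < j → j < P i → P i < P j → False := by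
    intro i j h1 h2 h3
    have hmem2 : ({F : Finset D | (W.letter i).1 ∈ F ∧ g F i = P i} ∩
        {F : Finset D | (W.letter j).1 ∈ F ∧ g F j = P j}) ∈ U :=
      Filter.inter_mem (hP i) (hP j)
    obtain ⟨F, ⟨hF1, hF2⟩, hF3, hF4⟩ := Ultrafilter.nonempty_of_mem hmem2
    obtain ⟨_, _, _, _, hnc⟩ := hg F i hF1
    rw [hF2] at hnc
    exact hnc j hF3 h1 h2 (hF4 ▸ h3)
  -- Step 3 : the pairing
  refine ⟨{p : W.ι × W.ι | p.1 < p.2 ∧ P p.1 = p.2}, ?_, ?_⟩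
  · have hinvol : ∀ p : W.ι × W.ι, p ∈ {p : W.ι × W.ι | p.1 < p.2 ∧ P p.1 = p.2} →
        P p.2 = p.1 := by
      rintro p ⟨h1, h2⟩
      rw [← h2]
      exact (hProp2 p.1).2.1
    constructor
    · exact fun p hp => hp.1
    · rintro p ⟨hp1, hp2⟩
      have := (hProp2 p.1).2.2
      rw [hp2] at this
      constructor
      · rw [this]; rfl
      · rw [this]
        show (W.letter p.1).2 = !(!(W.letter p.1).2)
        rw [Bool.not_not]
    · rintro p hp q hq hne
      obtain ⟨hp1, hp2⟩ := hp
      obtain ⟨hq1, hq2⟩ := hq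
      have hpq2 := hinvol p ⟨hp1, hp2⟩
      have hqq2 := hinvol q ⟨hq1, hq2⟩
      refine ⟨?_, ?_, ?_, ?_⟩
      · intro h
        exact hne (Prod.ext h (by rw [← hp2, ← hq2, h]))
      · intro h
        have hth : p.2 = q.1 := by rw [← hp2, h, hqq2]
        rw [← h] at hq1
        have l2 := lt_trans hq1 hp1
        rw [hth] at l2
        exact lt_irrefl _ l2
      · intro h
        have hth : p.1 = q.2 := by rw [← hpq2, h, hq2]
        rw [h] at hp1
        have l2 := lt_trans hp1 hq1
        rw [← hth] at l2
        exact lt_irrefl _ l2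
      · intro h
        exact hne (Prod.ext (by rw [← hpq2, ← hqq2, h]) h)
    · rintro p ⟨hp1, hp2⟩ q ⟨hq1, hq2⟩ ⟨h1, h2, h3⟩
      exact hProp3 p.1 q.1 h1 (hp2 ▸ h2) (by rw [hp2, hq2]; exact h3)
    · rintro p _ k _ _
      rcases lt_trichotomy k (P k) with h | h | h
      · exact ⟨(k, P k), ⟨h, rfl⟩, Or.inl rfl⟩
      · exact absurd h.symm (hProp2 k).1
      · exact ⟨(P k, k), ⟨h, (hProp2 k).2.1⟩, Or.inr rfl⟩
  · intro k
    rcases lt_trichotomy k (P k) with h | h | h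
    · exact ⟨(k, P k), ⟨h, rfl⟩, Or.inl rfl⟩
    · exact absurd h.symm (hProp2 k).1
    · exact ⟨(P k, k), ⟨h, (hProp2 k).2.1⟩, Or.inr rfl⟩


/-- (Cannon–Conner) An infinitary word over a countable alphabet `D` is equivalent to the
empty word if and only if it carries a noncrossing inverse pairing whose union is the
whole index set. -/
theorem infword_null_iff_exists_ncip {D : Type*} [Countable D] (W : InfWord D) :
    W.IsNull ↔ ∃ Γ : Set (W.ι × W.ι), InfNCIP W Γ ∧
      ∀ i : W.ι, ∃ p ∈ Γ, p.1 = i ∨ p.2 = i := by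
  exact ⟨fun h => exists_ncip_of_isNull W h, fun ⟨Γ, h1, h2⟩ => isNull_of_ncip W Γ h1 h2⟩

end EarringPaper
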